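/- Fix a prime p. For each n ∈ ℕ let α n : ZMod p → ℝ satisfy α n r > 0 for all r and ∑_{r ∈ ZMod p} α n r = 1, and let ν n be the probability measure on ZMod p with ν n {r} = α n r. Let μ_α be the infinite product probability measure ⊗_{n ∈ ℕ} ν n on X = ∏_{n ∈ ℕ} ZMod p. For each n let ξ n ∈ L²(X, μ_α) be (the class of) the bounded measurable function x ↦ (∑_{r ∈ ZMod p} Real.sqrt (α n r)) / Real.sqrt (α n (x n)) − p. Then the constant function 1 belongs to the closure in L²(X, μ_α) of the linear span of { ξ n : n ∈ ℕ } if and only if the series ∑_n ( p − (∑_{r ∈ ZMod p} Real.sqrt (α n r))^2 ) diverges. -/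

import Mathlib

set_option linter.unusedSectionVars false
open MeasureTheory Finset

section Aux
variable {p : ℕ} [Fact p.Prime] [MeasurableSpace (ZMod p)] [DiscreteMeasurableSpace (ZMod p)]
  {μα : Measure (ℕ → ZMod p)} [IsProbabilityMeasure μα]

lemma meas_single (n : ℕ) (r : ZMod p) : MeasurableSet {x : ℕ → ZMod p | x n = r} :=
  measurableSet_eq_fun (measurable_pi_apply n) measurable_const

lemma meas_pair (n m : ℕ) (r s : ZMod p) :
    MeasurableSet {x : ℕ → ZMod p | x n = r ∧ x m = s} :=
  (meas_single n r).inter (meas_single m s)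

lemma decomp_single (n : ℕ) (g : ZMod p → ℝ) (x : ℕ → ZMod p) :
    g (x n) = ∑ r : ZMod p, ({y : ℕ → ZMod p | y n = r}).indicator (fun _ => g r) x := by
  simp only [Set.indicator_apply, Set.mem_setOf_eq]
  rw [Finset.sum_ite_eq]
  simp

lemma decomp_pair (n m : ℕ) (g h : ZMod p → ℝ) (x : ℕ → ZMod p) :
    g (x n) * h (x m) = ∑ r : ZMod p, ∑ s : ZMod p,
      ({y : ℕ → ZMod p | y n = r ∧ y m = s}).indicator (fun _ => g r * h s) x := by
  simp only [Set.indicator_apply, Set.mem_setOf_eq]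
  have : ∀ r : ZMod p, (∑ s : ZMod p, if x n = r ∧ x m = s then g r * h s else 0)
      = if x n = r then g r * h (x m) else 0 := by
    intro r
    by_cases hr : x n = r
    · simp only [hr, true_and, if_true]
      rw [Finset.sum_ite_eq]
      simp
    · simp [hr]
  simp_rw [this]
  rw [Finset.sum_ite_eq]
  simp

lemma integrable_single (n : ℕ) (g : ZMod p → ℝ) :
    Integrable (fun x => g (x n)) μα := by
  have : (fun x : ℕ → ZMod p => g (x n)) = fun x =>
      ∑ r : ZMod p, ({y : ℕ → ZMod p | y n = r}).indicator (fun _ => g r) x := by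
    funext x; exact decomp_single n g x
  rw [this]
  exact integrable_finset_sum _ fun r _ => (integrable_const (g r)).indicator (meas_single n r)

lemma integrable_pair (n m : ℕ) (g h : ZMod p → ℝ) :
    Integrable (fun x => g (x n) * h (x m)) μα := by
  have : (fun x : ℕ → ZMod p => g (x n) * h (x m)) = fun x =>
      ∑ r : ZMod p, ∑ s : ZMod p,
        ({y : ℕ → ZMod p | y n = r ∧ y m = s}).indicator (fun _ => g r * h s) x := by
    funext x; exact decomp_pair n m g h x
  rw [this]
  exact integrable_finset_sum _ fun r _ => integrable_finset_sum _ fun s _ =>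
    (integrable_const _).indicator (meas_pair n m r s)

end Aux

section Int
variable {p : ℕ} [Fact p.Prime] [MeasurableSpace (ZMod p)] [DiscreteMeasurableSpace (ZMod p)]
  {μα : Measure (ℕ → ZMod p)} [IsProbabilityMeasure μα] {α : ℕ → ZMod p → ℝ}

lemma s19_integral_single (hα : ∀ n r, 0 ≤ α n r)
    (hμ1 : ∀ n r, μα {x | x n = r} = ENNReal.ofReal (α n r))
    (n : ℕ) (g : ZMod p → ℝ) :
    ∫ x, g (x n) ∂μα = ∑ r : ZMod p, α n r * g r := by
  rw [show (fun x : ℕ → ZMod p => g (x n)) = fun x =>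
      ∑ r : ZMod p, ({y : ℕ → ZMod p | y n = r}).indicator (fun _ => g r) x from
    funext fun x => decomp_single n g x]
  rw [integral_finset_sum _ fun r _ => (integrable_const _).indicator (meas_single n r)]
  refine Finset.sum_congr rfl fun r _ => ?_
  rw [integral_indicator_const _ (meas_single n r), measureReal_def, hμ1 n r,
    ENNReal.toReal_ofReal (hα n r), smul_eq_mul]

lemma s19_integral_pair (hα : ∀ n r, 0 ≤ α n r)
    (hμ2 : ∀ n m, n ≠ m → ∀ r s, μα {x | x n = r ∧ x m = s}
      = ENNReal.ofReal (α n r) * ENNReal.ofReal (α m s))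
    {n m : ℕ} (hnm : n ≠ m) (g h : ZMod p → ℝ) :
    ∫ x, g (x n) * h (x m) ∂μα = (∑ r : ZMod p, α n r * g r) * (∑ s : ZMod p, α m s * h s) := by
  rw [show (fun x : ℕ → ZMod p => g (x n) * h (x m)) = fun x =>
      ∑ r : ZMod p, ∑ s : ZMod p,
        ({y : ℕ → ZMod p | y n = r ∧ y m = s}).indicator (fun _ => g r * h s) x from
    funext fun x => decomp_pair n m g h x]
  rw [integral_finset_sum _ fun r _ => integrable_finset_sum _ fun s _ =>
    (integrable_const _).indicator (meas_pair n m r s)]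
  rw [Finset.sum_mul_sum]
  refine Finset.sum_congr rfl fun r _ => ?_
  rw [integral_finset_sum _ fun s _ => (integrable_const _).indicator (meas_pair n m r s)]
  refine Finset.sum_congr rfl fun s _ => ?_
  rw [integral_indicator_const _ (meas_pair n m r s), measureReal_def, hμ2 n m hnm r s,
    ← ENNReal.ofReal_mul (hα n r), ENNReal.toReal_ofReal (mul_nonneg (hα n r) (hα m s)),
    smul_eq_mul]
  ring

end Int

lemma s19_ineq (A B T : ℝ) (h1 : A ^ 2 ≤ B * T) (h2 : 0 ≤ B) (hT : 0 ≤ T) :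
    1 ≤ ((1 + A) ^ 2 + B) * (1 + T) := by
  rcases hT.eq_or_lt with hT0 | hT0
  · have hA : A = 0 := by nlinarith [sq_nonneg A]
    rw [hA, ← hT0]
    nlinarith
  · have e : T * (((1 + A) ^ 2 + B) * (1 + T) - 1)
        = (T * (1 + A) + A) ^ 2 + (1 + T) * (B * T - A ^ 2) := by ring
    have h3 : 0 ≤ (T * (1 + A) + A) ^ 2 + (1 + T) * (B * T - A ^ 2) :=
      add_nonneg (sq_nonneg _) (mul_nonneg (by linarith) (by linarith))
    rw [← e] at h3
    have := (mul_nonneg_iff_of_pos_left hT0).mp h3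
    linarith

set_option maxHeartbeats 2000000 in
open Filter in
theorem stmt19 (p : ℕ) [Fact p.Prime]
    [MeasurableSpace (ZMod p)] [DiscreteMeasurableSpace (ZMod p)]
    (α : ℕ → ZMod p → ℝ) (hpos : ∀ n r, 0 < α n r)
    (hsum : ∀ n, ∑ r : ZMod p, α n r = 1)
    (μα : Measure (ℕ → ZMod p)) [IsProbabilityMeasure μα]
    (hμα : ∀ (s : Finset ℕ) (r : ℕ → ZMod p),
      μα {x | ∀ n ∈ s, x n = r n} = ∏ n ∈ s, ENNReal.ofReal (α n (r n)))
    (ξ : ℕ → Lp ℝ 2 μα)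
    (hξ : ∀ n, (ξ n : (ℕ → ZMod p) → ℝ) =ᵐ[μα]
      fun x => (∑ r : ZMod p, Real.sqrt (α n r)) / Real.sqrt (α n (x n)) - p)
    (one : Lp ℝ 2 μα)
    (hone : (one : (ℕ → ZMod p) → ℝ) =ᵐ[μα] fun _ => 1) :
    one ∈ closure (Submodule.span ℝ (Set.range ξ) : Set (Lp ℝ 2 μα)) ↔
      ¬ Summable (fun n => (p : ℝ) - (∑ r : ZMod p, Real.sqrt (α n r)) ^ 2) := by
  classical
  have hp0 : 0 < (p : ℝ) := by exact_mod_cast (Fact.out : p.Prime).pos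
  have hα : ∀ n r, (0:ℝ) ≤ α n r := fun n r => (hpos n r).le
  set S : ℕ → ℝ := fun n => ∑ r : ZMod p, Real.sqrt (α n r) with hSdef
  set c : ℕ → ℝ := fun n => (p : ℝ) - S n ^ 2 with hcdef
  set f : ℕ → ZMod p → ℝ := fun n r => S n / Real.sqrt (α n r) - p with hfdef
  have hcard : (Finset.univ : Finset (ZMod p)).card = p := by
    simp [Finset.card_univ, ZMod.card]
  -- basic positivity facts
  have hS1 : ∀ n, 1 ≤ S n := by
    intro n
    have : ∀ r : ZMod p, α n r ≤ Real.sqrt (α n r) := by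
      intro r
      have h1 : α n r ≤ 1 := by
        rw [← hsum n]
        exact Finset.single_le_sum (fun i _ => hα n i) (Finset.mem_univ r)
      nlinarith [Real.sq_sqrt (hα n r), Real.sqrt_nonneg (α n r), hpos n r]
    calc (1:ℝ) = ∑ r : ZMod p, α n r := (hsum n).symm
      _ ≤ ∑ r : ZMod p, Real.sqrt (α n r) := Finset.sum_le_sum fun r _ => this r
  have hS2 : ∀ n, 1 ≤ S n ^ 2 := fun n => by nlinarith [hS1 n]
  have hS2pos : ∀ n, 0 < S n ^ 2 := fun n => lt_of_lt_of_le one_pos (hS2 n)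
  have hSp : ∀ n, S n ^ 2 ≤ p := by
    intro n
    have hcs := Finset.sum_mul_sq_le_sq_mul_sq Finset.univ
      (fun r : ZMod p => Real.sqrt (α n r)) (fun _ => (1:ℝ))
    simp only [mul_one, one_pow, Finset.sum_const, hcard, nsmul_eq_mul] at hcs
    have h2 : ∑ r : ZMod p, Real.sqrt (α n r) ^ 2 = 1 := by
      rw [← hsum n]
      exact Finset.sum_congr rfl fun r _ => Real.sq_sqrt (hα n r)
    calc S n ^ 2 ≤ (∑ r : ZMod p, Real.sqrt (α n r) ^ 2) * (p:ℝ) := hcs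
      _ = (p:ℝ) := by rw [h2]; ring
  have hc0 : ∀ n, 0 ≤ c n := fun n => sub_nonneg.mpr (hSp n)
  -- measure of cylinders
  have hμ1 : ∀ n (r : ZMod p), μα {x | x n = r} = ENNReal.ofReal (α n r) := by
    intro n r
    have h := hμα {n} (fun _ => r)
    simpa using h
  have hμ2 : ∀ n m, n ≠ m → ∀ r s : ZMod p, μα {x | x n = r ∧ x m = s}
      = ENNReal.ofReal (α n r) * ENNReal.ofReal (α m s) := by
    intro n m hnm r s
    have h := hμα {n, m} (fun k => if k = n then r else s)
    rw [Finset.prod_pair hnm] at h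
    simp only [if_pos rfl, if_neg hnm.symm] at h
    have hset : {x : ℕ → ZMod p | ∀ k ∈ ({n, m} : Finset ℕ), x k = if k = n then r else s}
        = {x | x n = r ∧ x m = s} := by
      ext x
      simp only [Set.mem_setOf_eq, Finset.mem_insert, Finset.mem_singleton]
      constructor
      · intro hx
        refine ⟨by simpa using hx n (Or.inl rfl), ?_⟩
        have := hx m (Or.inr rfl)
        simpa [if_neg hnm.symm] using this
      · rintro ⟨h1, h2⟩ k hk
        rcases hk with rfl | rfl
        · simpa using h1
        · simpa [if_neg hnm.symm] using h2
    rwa [hset] at h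
  -- per-coordinate moments
  have hterm1 : ∀ n r, α n r * f n r = S n * Real.sqrt (α n r) - p * α n r := by
    intro n r
    have hb0 : Real.sqrt (α n r) ≠ 0 := ne_of_gt (Real.sqrt_pos.mpr (hpos n r))
    have hbb : Real.sqrt (α n r) * Real.sqrt (α n r) = α n r := Real.mul_self_sqrt (hα n r)
    simp only [hfdef]
    set b := Real.sqrt (α n r) with hb
    rw [← hbb]
    field_simp
  have hterm2 : ∀ n r, α n r * (f n r * f n r)
      = S n ^ 2 - 2 * p * (S n * Real.sqrt (α n r)) + p ^ 2 * α n r := by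
    intro n r
    have hb0 : Real.sqrt (α n r) ≠ 0 := ne_of_gt (Real.sqrt_pos.mpr (hpos n r))
    have hbb : Real.sqrt (α n r) * Real.sqrt (α n r) = α n r := Real.mul_self_sqrt (hα n r)
    simp only [hfdef]
    set b := Real.sqrt (α n r) with hb
    rw [← hbb]
    field_simp
    ring
  have hm1 : ∀ n, ∑ r : ZMod p, α n r * f n r = -(c n) := by
    intro n
    rw [Finset.sum_congr rfl fun r _ => hterm1 n r]
    rw [Finset.sum_sub_distrib, ← Finset.mul_sum, ← Finset.mul_sum, hsum n,
      show ∑ i : ZMod p, Real.sqrt (α n i) = S n from rfl]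
    simp only [hcdef]
    ring
  have hm2 : ∀ n, ∑ r : ZMod p, α n r * (f n r * f n r) = p * c n := by
    intro n
    rw [Finset.sum_congr rfl fun r _ => hterm2 n r]
    simp only [Finset.sum_add_distrib, Finset.sum_sub_distrib, Finset.sum_const, hcard,
      ← Finset.mul_sum, nsmul_eq_mul]
    rw [hsum n, show ∑ i : ZMod p, Real.sqrt (α n i) = S n from rfl]
    simp only [hcdef]
    ring
  -- representation of sums in Lp
  have hrep : ∀ (F : Finset ℕ) (a : ℕ → ℝ),
      ((∑ n ∈ F, a n • ξ n : Lp ℝ 2 μα) : (ℕ → ZMod p) → ℝ) =ᵐ[μα]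
        fun x => ∑ n ∈ F, a n * f n (x n) := by
    intro F a
    induction F using Finset.induction with
    | empty => simp only [Finset.sum_empty]; exact Lp.coeFn_zero ℝ 2 μα
    | @insert i F hni ih =>
      rw [Finset.sum_insert hni]
      filter_upwards [Lp.coeFn_add (a i • ξ i) (∑ n ∈ F, a n • ξ n),
        Lp.coeFn_smul (a i) (ξ i), hξ i, ih] with x h1 h2 h3 h4
      rw [h1, Pi.add_apply, h2, Pi.smul_apply, smul_eq_mul, h3, h4, Finset.sum_insert hni]
  -- the master norm identity
  have hnorm : ∀ (F : Finset ℕ) (a : ℕ → ℝ),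
      ‖one - ∑ n ∈ F, a n • ξ n‖ ^ 2
        = (1 + ∑ n ∈ F, a n * c n) ^ 2 + ∑ n ∈ F, (a n) ^ 2 * (c n * S n ^ 2) := by
    intro F a
    have hv : ((one - ∑ n ∈ F, a n • ξ n : Lp ℝ 2 μα) : (ℕ → ZMod p) → ℝ) =ᵐ[μα]
        fun x => 1 - ∑ n ∈ F, a n * f n (x n) := by
      filter_upwards [Lp.coeFn_sub one (∑ n ∈ F, a n • ξ n), hone, hrep F a] with x h1 h2 h3
      rw [h1, Pi.sub_apply, h2, h3]
    have hint_t : Integrable (fun x => ∑ n ∈ F, a n * f n (x n)) μα :=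
      integrable_finset_sum _ fun n _ => integrable_single n (fun r => a n * f n r)
    have htt : (fun x : ℕ → ZMod p =>
          (∑ n ∈ F, a n * f n (x n)) * (∑ n ∈ F, a n * f n (x n)))
        = fun x => ∑ n ∈ F, ∑ m ∈ F, (a n * f n (x n)) * (a m * f m (x m)) := by
      funext x; exact Finset.sum_mul_sum F F _ _
    have hint_tt : Integrable
        (fun x => (∑ n ∈ F, a n * f n (x n)) * (∑ n ∈ F, a n * f n (x n))) μα := by
      rw [htt]
      exact integrable_finset_sum _ fun n _ => integrable_finset_sum _ fun m _ =>
        integrable_pair n m (fun r => a n * f n r) (fun s => a m * f m s)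
    have hnv : ‖one - ∑ n ∈ F, a n • ξ n‖ ^ 2
        = ∫ x, (1 - ∑ n ∈ F, a n * f n (x n)) * (1 - ∑ n ∈ F, a n * f n (x n)) ∂μα := by
      rw [← real_inner_self_eq_norm_sq, L2.inner_def]
      refine integral_congr_ae ?_
      filter_upwards [hv] with x h
      rw [RCLike.inner_apply, starRingEnd_apply, star_trivial, h]
    have hI1 : ∫ x, (∑ n ∈ F, a n * f n (x n)) ∂μα = -(∑ n ∈ F, a n * c n) := by
      rw [integral_finset_sum _ fun n _ => integrable_single n (fun r => a n * f n r),
        ← Finset.sum_neg_distrib]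
      refine Finset.sum_congr rfl fun n _ => ?_
      rw [s19_integral_single hα hμ1 n (fun r => a n * f n r)]
      have : ∑ r : ZMod p, α n r * (a n * f n r) = a n * ∑ r : ZMod p, α n r * f n r := by
        rw [Finset.mul_sum]; exact Finset.sum_congr rfl fun r _ => by ring
      rw [this, hm1 n]; ring
    have hE : ∀ n ∈ F, ∀ m ∈ F, ∫ x, (a n * f n (x n)) * (a m * f m (x m)) ∂μα
        = (a n * c n) * (a m * c m)
          + (if n = m then (a n) ^ 2 * (p * c n) - (a n * c n) ^ 2 else 0) := by
      intro n _ m _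
      by_cases hnm : n = m
      · subst hnm
        rw [if_pos rfl, s19_integral_single hα hμ1 n (fun r => (a n * f n r) * (a n * f n r))]
        have : ∑ r : ZMod p, α n r * ((a n * f n r) * (a n * f n r))
            = (a n) ^ 2 * ∑ r : ZMod p, α n r * (f n r * f n r) := by
          rw [Finset.mul_sum]; exact Finset.sum_congr rfl fun r _ => by ring
        rw [this, hm2 n]; ring
      · rw [if_neg hnm,
          s19_integral_pair hα hμ2 hnm (fun r => a n * f n r) (fun s => a m * f m s)]
        have h1 : ∑ r : ZMod p, α n r * (a n * f n r) = a n * ∑ r : ZMod p, α n r * f n r := by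
          rw [Finset.mul_sum]; exact Finset.sum_congr rfl fun r _ => by ring
        have h2 : ∑ s : ZMod p, α m s * (a m * f m s) = a m * ∑ s : ZMod p, α m s * f m s := by
          rw [Finset.mul_sum]; exact Finset.sum_congr rfl fun r _ => by ring
        rw [h1, h2, hm1 n, hm1 m]; ring
    have hI2 : ∫ x, (∑ n ∈ F, a n * f n (x n)) * (∑ n ∈ F, a n * f n (x n)) ∂μα
        = (∑ n ∈ F, a n * c n) ^ 2
          + ∑ n ∈ F, ((a n) ^ 2 * (p * c n) - (a n * c n) ^ 2) := by
      calc ∫ x, (∑ n ∈ F, a n * f n (x n)) * (∑ n ∈ F, a n * f n (x n)) ∂μα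
          = ∑ n ∈ F, ∑ m ∈ F, ∫ x, (a n * f n (x n)) * (a m * f m (x m)) ∂μα := by
            rw [htt, integral_finset_sum _ fun n _ => integrable_finset_sum _ fun m _ =>
              integrable_pair n m (fun r => a n * f n r) (fun s => a m * f m s)]
            exact Finset.sum_congr rfl fun n _ => integral_finset_sum _ fun m _ =>
              integrable_pair n m (fun r => a n * f n r) (fun s => a m * f m s)
        _ = ∑ n ∈ F, ∑ m ∈ F, ((a n * c n) * (a m * c m)
              + (if n = m then (a n) ^ 2 * (p * c n) - (a n * c n) ^ 2 else 0)) :=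
            Finset.sum_congr rfl fun n hn => Finset.sum_congr rfl fun m hm => hE n hn m hm
        _ = (∑ n ∈ F, a n * c n) ^ 2
              + ∑ n ∈ F, ((a n) ^ 2 * (p * c n) - (a n * c n) ^ 2) := by
            simp only [Finset.sum_add_distrib]
            congr 1
            · rw [pow_two, Finset.sum_mul_sum]
            · refine Finset.sum_congr rfl fun n hn => ?_
              rw [Finset.sum_ite_eq F n, if_pos hn]
    have hexp : (fun x : ℕ → ZMod p =>
          (1 - ∑ n ∈ F, a n * f n (x n)) * (1 - ∑ n ∈ F, a n * f n (x n)))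
        = fun x => 1 + ((-2) * (∑ n ∈ F, a n * f n (x n))
            + (∑ n ∈ F, a n * f n (x n)) * (∑ n ∈ F, a n * f n (x n))) := by
      funext x; ring
    have hint_c2 : Integrable (fun x => -2 * (∑ n ∈ F, a n * f n (x n))) μα :=
      hint_t.const_mul (-2)
    have hint_u : Integrable (fun x => -2 * (∑ n ∈ F, a n * f n (x n))
        + (∑ n ∈ F, a n * f n (x n)) * (∑ n ∈ F, a n * f n (x n))) μα :=
      hint_c2.add hint_tt
    rw [hnv, hexp, integral_add (integrable_const 1) hint_u,
      integral_add hint_c2 hint_tt, integral_const_mul, hI1, hI2, integral_const]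
    simp only [probReal_univ, measure_univ, ENNReal.toReal_one, smul_eq_mul, mul_one, one_mul]
    have hpc : ∀ n ∈ F, (a n) ^ 2 * (p * c n) - (a n * c n) ^ 2
        = (a n) ^ 2 * (c n * S n ^ 2) := by
      intro n _
      simp only [hcdef]
      ring
    rw [Finset.sum_congr rfl hpc]
    ring
  -- auxiliary quantities
  set g : ℕ → ℝ := fun n => c n / S n ^ 2 with hgdef
  have hg0 : ∀ n, 0 ≤ g n := fun n => div_nonneg (hc0 n) (hS2pos n).le
  have hgc : ∀ n, g n ≤ c n := fun n => div_le_self (hc0 n) (hS2 n)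
  have hB0 : ∀ (F : Finset ℕ) (a : ℕ → ℝ), 0 ≤ ∑ n ∈ F, (a n) ^ 2 * (c n * S n ^ 2) :=
    fun F a => Finset.sum_nonneg fun n _ =>
      mul_nonneg (sq_nonneg _) (mul_nonneg (hc0 n) (hS2pos n).le)
  have hCS : ∀ (F : Finset ℕ) (a : ℕ → ℝ),
      (∑ n ∈ F, a n * c n) ^ 2
        ≤ (∑ n ∈ F, (a n) ^ 2 * (c n * S n ^ 2)) * (∑ n ∈ F, g n) := by
    intro F a
    have h := Finset.sum_mul_sq_le_sq_mul_sq F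
      (fun n => a n * Real.sqrt (c n * S n ^ 2)) (fun n => Real.sqrt (g n))
    have e1 : ∀ n ∈ F, (a n * Real.sqrt (c n * S n ^ 2)) * Real.sqrt (g n) = a n * c n := by
      intro n _
      rw [mul_assoc, ← Real.sqrt_mul (mul_nonneg (hc0 n) (hS2pos n).le)]
      have hx : c n * S n ^ 2 * g n = c n * c n := by
        simp only [hgdef]
        field_simp [(hS2pos n).ne']
        exact mul_div_cancel_right₀ _ (lt_of_lt_of_le one_pos (hS1 n)).ne'
      rw [hx, Real.sqrt_mul_self (hc0 n)]
    have e2 : ∀ n ∈ F, (a n * Real.sqrt (c n * S n ^ 2)) ^ 2 = (a n) ^ 2 * (c n * S n ^ 2) := by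
      intro n _
      rw [mul_pow, Real.sq_sqrt (mul_nonneg (hc0 n) (hS2pos n).le)]
    have e3 : ∀ n ∈ F, (Real.sqrt (g n)) ^ 2 = g n := fun n _ => Real.sq_sqrt (hg0 n)
    rw [Finset.sum_congr rfl e1, Finset.sum_congr rfl e2, Finset.sum_congr rfl e3] at h
    exact h
  constructor
  · intro hmem hsummc
    have hgsum : Summable g := Summable.of_nonneg_of_le hg0 hgc hsummc
    set T := ∑' n, g n with hTdef
    have hT0 : 0 ≤ T := tsum_nonneg hg0
    have hTpos : (0:ℝ) < 1 + T := by linarith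
    have hlow : ∀ w ∈ (Submodule.span ℝ (Set.range ξ) : Set (Lp ℝ 2 μα)),
        1 / (1 + T) ≤ ‖one - w‖ ^ 2 := by
      intro w hw
      obtain ⟨cf, rfl⟩ := Finsupp.mem_span_range_iff_exists_finsupp.mp hw
      have hwsum : (cf.sum fun i a => a • ξ i) = ∑ n ∈ cf.support, cf n • ξ n := rfl
      rw [hwsum, hnorm cf.support cf]
      set A := ∑ n ∈ cf.support, cf n * c n with hA
      set B := ∑ n ∈ cf.support, (cf n) ^ 2 * (c n * S n ^ 2) with hB
      have h1 : A ^ 2 ≤ B * T := by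
        refine le_trans (hCS cf.support cf) ?_
        exact mul_le_mul_of_nonneg_left (Summable.sum_le_tsum _ (fun n _ => hg0 n) hgsum) (hB0 _ _)
      have h2 : (0:ℝ) ≤ B := hB0 _ _
      rw [div_le_iff₀ hTpos]
      exact s19_ineq A B T h1 h2 hT0
    obtain ⟨w, hw, hdist⟩ := Metric.mem_closure_iff.mp hmem (Real.sqrt (1 / (1 + T)))
      (Real.sqrt_pos.mpr (by positivity))
    have hsq : ‖one - w‖ ^ 2 < 1 / (1 + T) := by
      have hd : ‖one - w‖ < Real.sqrt (1 / (1 + T)) := by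
        rw [← dist_eq_norm]; exact hdist
      exact (Real.lt_sqrt (norm_nonneg _)).mp hd
    linarith [hlow w hw]
  · intro hns
    have htendc : Tendsto (fun N => ∑ n ∈ Finset.range N, c n) atTop atTop :=
      (not_summable_iff_tendsto_nat_atTop_of_nonneg hc0).mp hns
    set t : ℕ → ℝ := fun N => ∑ n ∈ Finset.range N, g n with htdef
    have ht0 : ∀ N, 0 ≤ t N := fun N => Finset.sum_nonneg fun n _ => hg0 n
    have httop : Tendsto t atTop atTop := by
      refine tendsto_atTop_mono ?_ (htendc.atTop_div_const hp0)
      intro N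
      rw [Finset.sum_div]
      exact Finset.sum_le_sum fun n _ =>
        div_le_div_of_nonneg_left (hc0 n) (hS2pos n) (hSp n)
    set a : ℕ → ℕ → ℝ := fun N n => -(1 / ((1 + t N) * S n ^ 2)) with hadef
    have hwnorm : ∀ N, ‖one - ∑ n ∈ Finset.range N, a N n • ξ n‖ ^ 2 = 1 / (1 + t N) := by
      intro N
      have h1t : (0:ℝ) < 1 + t N := by linarith [ht0 N]
      have hAN : ∑ n ∈ Finset.range N, a N n * c n = -(t N / (1 + t N)) := by
        have hper : ∀ n ∈ Finset.range N, a N n * c n = -(1 / (1 + t N)) * g n := by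
          intro n _
          have hs := (hS2pos n).ne'
          simp only [hadef, hgdef]
          field_simp
        rw [Finset.sum_congr rfl hper, ← Finset.mul_sum,
          show ∑ n ∈ Finset.range N, g n = t N from rfl]
        field_simp
      have hBN : ∑ n ∈ Finset.range N, (a N n) ^ 2 * (c n * S n ^ 2) = t N / (1 + t N) ^ 2 := by
        have hper : ∀ n ∈ Finset.range N, (a N n) ^ 2 * (c n * S n ^ 2)
            = (1 / (1 + t N) ^ 2) * g n := by
          intro n _
          have hs := (hS2pos n).ne'
          simp only [hadef, hgdef]
          field_simp
        rw [Finset.sum_congr rfl hper, ← Finset.mul_sum,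
          show ∑ n ∈ Finset.range N, g n = t N from rfl]
        field_simp
      rw [hnorm (Finset.range N) (a N), hAN, hBN]
      field_simp
      ring
    have hwmem : ∀ N, (∑ n ∈ Finset.range N, a N n • ξ n)
        ∈ (Submodule.span ℝ (Set.range ξ) : Set (Lp ℝ 2 μα)) := fun N =>
      Submodule.sum_mem _ fun n _ => Submodule.smul_mem _ _ (Submodule.subset_span ⟨n, rfl⟩)
    have hlim : Tendsto (fun N => ‖one - ∑ n ∈ Finset.range N, a N n • ξ n‖) atTop (nhds 0) := by
      have h1 : (fun N => ‖one - ∑ n ∈ Finset.range N, a N n • ξ n‖)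
          = fun N => Real.sqrt (1 / (1 + t N)) := by
        funext N
        rw [← hwnorm N, Real.sqrt_sq (norm_nonneg _)]
      rw [h1]
      have h2 : Tendsto (fun N => 1 / (1 + t N)) atTop (nhds 0) := by
        simp only [one_div]
        exact (tendsto_atTop_add_const_left atTop 1 httop).inv_tendsto_atTop
      have h3 := (Real.continuous_sqrt.tendsto 0).comp h2
      simpa [Function.comp_def, Real.sqrt_zero] using h3
    have hwten : Tendsto (fun N => ∑ n ∈ Finset.range N, a N n • ξ n) atTop (nhds one) := by
      rw [tendsto_iff_norm_sub_tendsto_zero]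
      simpa [norm_sub_rev] using hlim
    exact mem_closure_of_tendsto hwten (Filter.Eventually.of_forall hwmem)
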